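/- arXiv:1911.08339 — 3 statements merged into one kernel-verified Lean document; each statement's English description precedes it below -/
import Mathlib

section
/- For any $a_1,\dots,a_k \in [0,1]$, any probability distribution $\pi$ on $[k]$, and any $\beta \in (0,1]$, there exists a set $S \subseteq [k]$ such that $\pi(S) \cdot \min_{v \in S} a_v \ge \frac{\sum_{v=1}^k \pi(v) a_v - \beta}{2\log_2(1/\beta)}$. -/
open scoped BigOperators

lemma exp_bin_key (k : ℕ) (a : Fin k → ℝ) (π : Fin k → ℝ) (hπ0 : ∀ v, 0 ≤ π v)
    (ha1 : ∀ v, a v ≤ 1) (M : ℝ) (hM0 : 0 ≤ M) (T : Finset (Fin k)) :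
    ∀ β : ℝ, 0 < β → β ≤ 1 → (∀ v ∈ T, β < a v) →
      (∀ v ∈ T, (∑ u ∈ T.filter (fun u => a v ≤ a u), π u) * a v ≤ M) →
      ∑ v ∈ T, π v * a v ≤ M * Real.log (1 / β) + β * ∑ v ∈ T, π v := by
  induction T using Finset.strongInduction with
  | _ T ih =>
    intro β hβ0 hβ1 hlt hM
    rcases T.eq_empty_or_nonempty with rfl | hT
    · simp only [Finset.sum_empty, mul_zero, add_zero]
      have : 0 ≤ Real.log (1 / β) := by
        apply Real.log_nonneg
        rw [le_div_iff₀ hβ0]; linarith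
      positivity
    · obtain ⟨v0, hv0T, hv0⟩ := T.exists_mem_eq_inf' hT a
      set m := T.inf' hT a with hm
      have hmβ : β < m := hv0 ▸ hlt v0 hv0T
      have hm0 : 0 < m := lt_trans hβ0 hmβ
      have hm1 : m ≤ 1 := hv0 ▸ ha1 v0
      have hinf : ∀ v ∈ T, m ≤ a v := fun v hv => Finset.inf'_le a hv
      set T' := T.filter (fun v => m < a v) with hT'
      have hss : T' ⊂ T := by
        apply Finset.filter_ssubset.mpr
        exact ⟨v0, hv0T, by simp [← hv0]⟩
      -- sum over T splits
      have hsplit : ∑ v ∈ T, π v * a v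
          = ∑ v ∈ T', π v * a v + m * ∑ v ∈ T.filter (fun v => ¬ m < a v), π v := by
        rw [Finset.mul_sum, ← Finset.sum_filter_add_sum_filter_not T (fun v => m < a v)]
        congr 1
        apply Finset.sum_congr rfl
        intro v hv
        simp only [Finset.mem_filter, not_lt] at hv
        have : a v = m := le_antisymm hv.2 (hinf v hv.1)
        rw [this]; ring
      have hM' : ∀ v ∈ T', (∑ u ∈ T'.filter (fun u => a v ≤ a u), π u) * a v ≤ M := by
        intro v hv
        have hav : 0 < a v := lt_trans hβ0 (hlt v (Finset.mem_of_mem_filter v hv))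
        refine le_trans ?_ (hM v (Finset.mem_of_mem_filter v hv))
        apply mul_le_mul_of_nonneg_right _ (le_of_lt hav)
        apply Finset.sum_le_sum_of_subset_of_nonneg
        · exact Finset.filter_subset_filter _ (Finset.filter_subset _ _)
        · intro u _ _; exact hπ0 u
      have hIH := ih T' hss m hm0 hm1 (fun v hv => (Finset.mem_filter.mp hv).2) hM'
      -- M ≥ m * π(T)
      have hMP : m * ∑ v ∈ T, π v ≤ M := by
        have h := hM v0 hv0T
        rw [← hv0] at h
        have hfe : T.filter (fun u => m ≤ a u) = T := by
          rw [Finset.filter_eq_self]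
          intro u hu
          exact hinf u hu
        rw [hfe] at h
        linarith [h]
      have hP0 : 0 ≤ ∑ v ∈ T, π v := Finset.sum_nonneg (fun v _ => hπ0 v)
      -- (m - β) * π(T) ≤ M * log(m/β)
      have hlog1 : 1 - β / m ≤ Real.log (m / β) := by
        have h := Real.log_le_sub_one_of_pos (x := β / m) (by positivity)
        have : Real.log (β / m) = - Real.log (m / β) := by
          rw [← Real.log_inv]; congr 1; field_simp
        linarith [this ▸ h]
      have hlogpos : 0 ≤ Real.log (m / β) := by
        apply Real.log_nonneg
        rw [le_div_iff₀ hβ0]; linarith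
      have key2 : (m - β) * ∑ v ∈ T, π v ≤ M * Real.log (m / β) := by
        have h1 : m - β ≤ m * Real.log (m / β) := by
          have := mul_le_mul_of_nonneg_left hlog1 (le_of_lt hm0)
          have hne : m ≠ 0 := ne_of_gt hm0
          calc m - β = m * (1 - β / m) := by field_simp
            _ ≤ m * Real.log (m / β) := this
        calc (m - β) * ∑ v ∈ T, π v ≤ (m * Real.log (m / β)) * ∑ v ∈ T, π v :=
              mul_le_mul_of_nonneg_right h1 hP0
          _ = (m * ∑ v ∈ T, π v) * Real.log (m / β) := by ring
          _ ≤ M * Real.log (m / β) := mul_le_mul_of_nonneg_right hMP hlogpos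
      have hlogsplit : Real.log (1 / m) + Real.log (m / β) = Real.log (1 / β) := by
        rw [← Real.log_mul (by positivity) (by positivity)]
        congr 1; field_simp
      have hPsplit : ∑ v ∈ T', π v + ∑ v ∈ T.filter (fun v => ¬ m < a v), π v
          = ∑ v ∈ T, π v := Finset.sum_filter_add_sum_filter_not T _ π
      have hD0 : 0 ≤ ∑ v ∈ T.filter (fun v => ¬ m < a v), π v :=
        Finset.sum_nonneg (fun v _ => hπ0 v)
      nlinarith [hIH, hsplit, key2, hlogsplit, hPsplit, hD0, hmβ, hβ0]

/-- Exponential binning lemma: for values `a v ∈ [0,1]`, a probability distribution `π` on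
`Fin k`, and `β ∈ (0,1]`, there is a subset `S` with
`π(S) · min_{v ∈ S} a v ≥ (∑ v π v * a v - β) / (2 log₂(1/β))`. -/
theorem exponential_binning (k : ℕ) (a : Fin k → ℝ) (ha : ∀ v, a v ∈ Set.Icc (0 : ℝ) 1)
    (π : Fin k → ℝ) (hπ0 : ∀ v, 0 ≤ π v) (hπ1 : ∑ v, π v = 1)
    (β : ℝ) (hβ : β ∈ Set.Ioc (0 : ℝ) 1) :
    ∃ S : Finset (Fin k), ∃ hS : S.Nonempty,
      (∑ v ∈ S, π v) * S.inf' hS a ≥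
        (∑ v, π v * a v - β) / (2 * Real.logb 2 (1 / β)) := by
  obtain ⟨hβ0, hβ1⟩ := hβ
  have hk : Nonempty (Fin k) := by
    by_contra h
    rw [not_nonempty_iff] at h
    rw [Finset.sum_eq_zero (fun v _ => (h.false v).elim)] at hπ1
    norm_num at hπ1
  set X := ∑ v, π v * a v with hX
  have hlogb0 : 0 ≤ Real.logb 2 (1 / β) := by
    apply Real.logb_nonneg one_lt_two
    rw [le_div_iff₀ hβ0]; linarith
  by_cases hcase : X - β ≤ 0
  · obtain ⟨v⟩ := hk
    refine ⟨{v}, Finset.singleton_nonempty v, ?_⟩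
    have h1 : (∑ u ∈ ({v} : Finset (Fin k)), π u) * ({v} : Finset (Fin k)).inf' (Finset.singleton_nonempty v) a ≥ 0 := by
      simp only [Finset.sum_singleton, Finset.inf'_singleton]
      exact mul_nonneg (hπ0 v) (ha v).1
    refine le_trans ?_ h1
    exact div_nonpos_of_nonpos_of_nonneg hcase (by positivity)
  · push_neg at hcase
    have hβ1' : β < 1 := by
      by_contra h
      push_neg at h
      have hβe : β = 1 := le_antisymm hβ1 h
      have : X ≤ 1 := by
        rw [← hπ1]
        apply Finset.sum_le_sum
        intro v _
        nlinarith [(ha v).2, hπ0 v, (ha v).1]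
      linarith [hβe ▸ hcase]
    set T := Finset.univ.filter (fun v => β < a v) with hTdef
    have hT : T.Nonempty := by
      by_contra h
      rw [Finset.not_nonempty_iff_eq_empty] at h
      have : X ≤ β := by
        calc X ≤ ∑ v, π v * β := by
              apply Finset.sum_le_sum
              intro v _
              have : a v ≤ β := by
                by_contra hc
                push_neg at hc
                have : v ∈ T := Finset.mem_filter.mpr ⟨Finset.mem_univ v, hc⟩
                simp [h] at this
              exact mul_le_mul_of_nonneg_left this (hπ0 v)
          _ = β := by rw [← Finset.sum_mul, hπ1, one_mul]
      linarith
    set f : Fin k → ℝ := fun v => (∑ u ∈ T.filter (fun u => a v ≤ a u), π u) * a v with hf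
    obtain ⟨v0, hv0T, hv0⟩ := T.exists_mem_eq_sup' hT f
    set M := T.sup' hT f with hMdef
    have hM0 : 0 ≤ M := by
      rw [hv0, hf]
      have : 0 < a v0 := lt_trans hβ0 (Finset.mem_filter.mp hv0T).2
      have : 0 ≤ ∑ u ∈ T.filter (fun u => a v0 ≤ a u), π u :=
        Finset.sum_nonneg (fun u _ => hπ0 u)
      positivity
    have hMle : ∀ v ∈ T, f v ≤ M := fun v hv => Finset.le_sup' f hv
    have hkey := exp_bin_key k a π hπ0 (fun v => (ha v).2) M hM0 T β hβ0 hβ1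
      (fun v hv => (Finset.mem_filter.mp hv).2) hMle
    -- X ≤ M log(1/β) + β
    have hXbound : X ≤ M * Real.log (1 / β) + β := by
      have hXsplit : X = ∑ v ∈ T, π v * a v + ∑ v ∈ Finset.univ.filter (fun v => ¬ β < a v), π v * a v := by
        rw [hX, ← Finset.sum_filter_add_sum_filter_not Finset.univ (fun v => β < a v)]
      have hrest : ∑ v ∈ Finset.univ.filter (fun v => ¬ β < a v), π v * a v
          ≤ β * ∑ v ∈ Finset.univ.filter (fun v => ¬ β < a v), π v := by
        rw [Finset.mul_sum]
        apply Finset.sum_le_sum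
        intro v hv
        have : a v ≤ β := not_lt.mp (Finset.mem_filter.mp hv).2
        nlinarith [hπ0 v]
      have hPsum : ∑ v ∈ T, π v + ∑ v ∈ Finset.univ.filter (fun v => ¬ β < a v), π v = 1 := by
        rw [hTdef, Finset.sum_filter_add_sum_filter_not, hπ1]
      nlinarith [hkey]
    -- choose S
    set S := T.filter (fun u => a v0 ≤ a u) with hSdef
    have hSne : S.Nonempty := ⟨v0, Finset.mem_filter.mpr ⟨hv0T, le_refl _⟩⟩
    refine ⟨S, hSne, ?_⟩
    have hinfge : a v0 ≤ S.inf' hSne a := by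
      apply Finset.le_inf'
      intro u hu
      exact (Finset.mem_filter.mp hu).2
    have hS0 : 0 ≤ ∑ v ∈ S, π v := Finset.sum_nonneg (fun v _ => hπ0 v)
    have hLHS : M ≤ (∑ v ∈ S, π v) * S.inf' hSne a := by
      rw [hv0, hf]
      exact mul_le_mul_of_nonneg_left hinfge hS0
    -- chain of divisions
    have hlog0 : 0 < Real.log (1 / β) := by
      apply Real.log_pos
      rw [lt_div_iff₀ hβ0]; linarith
    have hdiv1 : (X - β) / Real.log (1 / β) ≤ M := by
      rw [div_le_iff₀ hlog0]
      linarith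
    have hlog2 : Real.log (1 / β) ≤ 2 * Real.logb 2 (1 / β) := by
      rw [Real.logb, div_eq_mul_inv (Real.log (1/β)) (Real.log 2)]
      have h2 : Real.log 2 < 1 := by
        have := Real.log_two_lt_d9
        linarith
      have h2' : 0 < Real.log 2 := Real.log_pos one_lt_two
      have hi : 1 ≤ (Real.log 2)⁻¹ := by
        rw [le_inv_comm₀ one_pos h2']
        linarith
      nlinarith [hlog0.le]
    have hdiv2 : (X - β) / (2 * Real.logb 2 (1 / β)) ≤ (X - β) / Real.log (1 / β) := by
      apply div_le_div_of_nonneg_left hcase.le hlog0 hlog2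
    calc (X - β) / (2 * Real.logb 2 (1 / β)) ≤ (X - β) / Real.log (1 / β) := hdiv2
      _ ≤ M := hdiv1
      _ ≤ _ := hLHS
end

section
/- Let $U$ be a real $k \times N$ matrix, and suppose $U = P \widetilde U Q$ where $P \in \mathbb{R}^{k\times k}$ and $Q \in \mathbb{R}^{N \times N}$ are diagonal matrices with $\mathrm{Tr}(P^2) = \mathrm{Tr}(Q^2) = 1$ and $\|\widetilde U\|_{2\to 2} \le t$. Then there exists a set $S \subseteq [k]$ with $|S| \ge k/2$ such that $\sqrt{k/2}\, \|\Pi_S U\|_{\infty \to 2} \le t$, where $\Pi_S$ is the coordinate projection onto the rows indexed by $S$. -/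
open scoped BigOperators

/-- Maximum ℓ₂ norm of a row. -/
noncomputable def rowNorm {ι d : Type*} [Fintype d] (R : Matrix ι d ℝ) : ℝ :=
  ⨆ i, Real.sqrt (∑ j, (R i j) ^ 2)

/-- Maximum ℓ₂ norm of a column. -/
noncomputable def colNorm {d κ : Type*} [Fintype d] (A : Matrix d κ ℝ) : ℝ :=
  ⨆ j, Real.sqrt (∑ i, (A i j) ^ 2)

/-- The γ₂ factorization norm. -/
noncomputable def gamma2 {ι κ : Type*} [Fintype ι] [Fintype κ] (M : Matrix ι κ ℝ) : ℝ :=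
  sInf {c | ∃ d : ℕ, ∃ R : Matrix ι (Fin d) ℝ, ∃ A : Matrix (Fin d) κ ℝ,
    R * A = M ∧ c = rowNorm R * colNorm A}

/-- Maximum absolute entry (the 1→∞ operator norm). -/
noncomputable def linfNorm {ι κ : Type*} (M : Matrix ι κ ℝ) : ℝ :=
  ⨆ i, ⨆ j, |M i j|

/-- The approximate γ₂ norm. -/
noncomputable def gamma2Approx {ι κ : Type*} [Fintype ι] [Fintype κ]
    (W : Matrix ι κ ℝ) (α : ℝ) : ℝ :=
  sInf {c | ∃ W' : Matrix ι κ ℝ, linfNorm (W - W') ≤ α ∧ c = gamma2 W'}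

/-- Matrix inner product. -/
def bullet {ι κ : Type*} [Fintype ι] [Fintype κ] (M N : Matrix ι κ ℝ) : ℝ :=
  ∑ i, ∑ j, M i j * N i j

/-- Entrywise ℓ₁ norm. -/
def l1NormM {ι κ : Type*} [Fintype ι] [Fintype κ] (M : Matrix ι κ ℝ) : ℝ :=
  ∑ i, ∑ j, |M i j|

/-- The dual γ₂ norm. -/
noncomputable def gamma2Star {ι κ : Type*} [Fintype ι] [Fintype κ] (U : Matrix ι κ ℝ) : ℝ :=
  sSup {c | ∃ V : Matrix ι κ ℝ, gamma2 V ≤ 1 ∧ c = bullet U V}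

/-- Spectral norm (2→2 operator norm). -/
noncomputable def norm2to2 {ι κ : Type*} [Fintype ι] [Fintype κ] (M : Matrix ι κ ℝ) : ℝ :=
  sSup {c | ∃ x : κ → ℝ, (∑ j, (x j) ^ 2) ≤ 1 ∧ c = Real.sqrt (∑ i, (M.mulVec x i) ^ 2)}

/-- ∞→2 operator norm. -/
noncomputable def normInfTo2 {ι κ : Type*} [Fintype ι] [Fintype κ] (M : Matrix ι κ ℝ) : ℝ :=
  sSup {c | ∃ x : κ → ℝ, (∀ j, |x j| ≤ 1) ∧ c = Real.sqrt (∑ i, (M.mulVec x i) ^ 2)}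

/-- Coordinate projection onto the rows indexed by `S`, as a matrix. -/
def projMat {k : ℕ} (S : Finset (Fin k)) : Matrix (Fin k) (Fin k) ℝ :=
  Matrix.of fun i j => if i = j ∧ i ∈ S then 1 else 0

lemma diag_sum_sq {k : ℕ} (P : Matrix (Fin k) (Fin k) ℝ) (hP : P.IsDiag) :
    (P * P).trace = ∑ i, (P i i)^2 := by
  simp only [Matrix.trace, Matrix.diag, Matrix.mul_apply]
  refine Finset.sum_congr rfl fun i _ => ?_
  rw [Finset.sum_eq_single i]
  · ring
  · intro j _ hj
    rw [hP hj, mul_zero]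
  · intro h; exact absurd (Finset.mem_univ i) h

lemma diag_mulVec {k : ℕ} (P : Matrix (Fin k) (Fin k) ℝ) (hP : P.IsDiag)
    (v : Fin k → ℝ) (i : Fin k) : P.mulVec v i = P i i * v i := by
  simp only [Matrix.mulVec, dotProduct]
  rw [Finset.sum_eq_single i]
  · intro j _ hj
    rw [hP (Ne.symm hj), zero_mul]
  · intro h; exact absurd (Finset.mem_univ i) h

lemma norm2to2_bdd {k N : ℕ} (M : Matrix (Fin k) (Fin N) ℝ) :
    BddAbove {c | ∃ x : Fin N → ℝ, (∑ j, (x j) ^ 2) ≤ 1 ∧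
      c = Real.sqrt (∑ i, (M.mulVec x i) ^ 2)} := by
  refine ⟨Real.sqrt (∑ i, ∑ j, (M i j)^2), ?_⟩
  rintro c ⟨x, hx, rfl⟩
  apply Real.sqrt_le_sqrt
  refine Finset.sum_le_sum fun i _ => ?_
  calc (M.mulVec x i)^2 ≤ (∑ j, (M i j)^2) * (∑ j, (x j)^2) := by
        simpa [Matrix.mulVec, dotProduct] using
          Finset.sum_mul_sq_le_sq_mul_sq Finset.univ (fun j => M i j) x
    _ ≤ (∑ j, (M i j)^2) * 1 :=
        mul_le_mul_of_nonneg_left hx (Finset.sum_nonneg fun _ _ => sq_nonneg _)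
    _ = _ := mul_one _

/-- If `U = P Ũ Q` with `P, Q` diagonal, `Tr(P²) = Tr(Q²) = 1` and `‖Ũ‖_{2→2} ≤ t`, then
there is a set `S` of at least half the rows with `√(k/2) ‖Π_S U‖_{∞→2} ≤ t`. -/
theorem gammastar_inftyTo2 (k N : ℕ) (t : ℝ) (U Ut : Matrix (Fin k) (Fin N) ℝ)
    (P : Matrix (Fin k) (Fin k) ℝ) (Q : Matrix (Fin N) (Fin N) ℝ)
    (hP : P.IsDiag) (hQ : Q.IsDiag)
    (hPtr : (P * P).trace = 1) (hQtr : (Q * Q).trace = 1)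
    (hU : U = P * Ut * Q) (ht : norm2to2 Ut ≤ t) :
    ∃ S : Finset (Fin k), (k : ℝ) / 2 ≤ S.card ∧
      Real.sqrt ((k : ℝ) / 2) * normInfTo2 (projMat S * U) ≤ t := by
  have hPtr' : ∑ i, (P i i)^2 = 1 := by rw [← diag_sum_sq P hP, hPtr]
  have hQtr' : ∑ j, (Q j j)^2 = 1 := by rw [← diag_sum_sq Q hQ, hQtr]
  have hk : 0 < k := by
    rcases Nat.eq_zero_or_pos k with h | h
    · subst h; simp at hPtr'
    · exact h
  have hk' : (0:ℝ) < k := by exact_mod_cast hk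
  set S : Finset (Fin k) := Finset.univ.filter (fun i => (P i i)^2 ≤ 2 / k) with hS
  have ht0 : 0 ≤ t := by
    refine le_trans ?_ ht
    refine le_csSup (norm2to2_bdd Ut) ⟨0, by simp, ?_⟩
    simp [Matrix.mulVec_zero]
  -- cardinality
  have hcard : (k : ℝ) / 2 ≤ S.card := by
    have hcompl : ∀ i ∈ Sᶜ, 2 / (k:ℝ) ≤ (P i i)^2 := by
      intro i hi
      simp only [hS, Finset.mem_compl, Finset.mem_filter, Finset.mem_univ, true_and,
        not_le] at hi
      exact hi.le
    have h1 : (Sᶜ.card : ℝ) * (2 / k) ≤ 1 := by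
      calc (Sᶜ.card : ℝ) * (2 / k) = ∑ _i ∈ Sᶜ, 2 / (k:ℝ) := by
            rw [Finset.sum_const, nsmul_eq_mul]
        _ ≤ ∑ i ∈ Sᶜ, (P i i)^2 := Finset.sum_le_sum hcompl
        _ ≤ ∑ i, (P i i)^2 :=
            Finset.sum_le_sum_of_subset_of_nonneg (Finset.subset_univ _)
              (fun _ _ _ => sq_nonneg _)
        _ = 1 := hPtr'
    have h2 : (Sᶜ.card : ℝ) ≤ k / 2 := by
      have h1' : (Sᶜ.card : ℝ) * 2 ≤ k := by
        rw [mul_div_assoc', div_le_one hk'] at h1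
        linarith
      linarith
    have h3 : (S.card : ℝ) + (Sᶜ.card : ℝ) = k := by
      have := Finset.card_add_card_compl S
      rw [Fintype.card_fin] at this
      exact_mod_cast this
    linarith
  refine ⟨S, hcard, ?_⟩
  -- main bound
  have hmain : normInfTo2 (projMat S * U) ≤ t * Real.sqrt (2 / k) := by
    apply Real.sSup_le
    · rintro c ⟨x, hx, rfl⟩
      set y := Q.mulVec x with hy
      set z := Ut.mulVec y with hz
      have hysum : ∑ j, (y j)^2 ≤ 1 := by
        calc ∑ j, (y j)^2 = ∑ j, (Q j j)^2 * (x j)^2 := by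
              refine Finset.sum_congr rfl fun j _ => ?_
              rw [hy, diag_mulVec Q hQ]; ring
          _ ≤ ∑ j, (Q j j)^2 * 1 := by
              refine Finset.sum_le_sum fun j _ => ?_
              have := hx j
              have : (x j)^2 ≤ 1 := by nlinarith [abs_nonneg (x j), sq_abs (x j)]
              nlinarith [sq_nonneg (Q j j)]
          _ = 1 := by simp [hQtr']
      have hzle : Real.sqrt (∑ i, (z i)^2) ≤ t :=
        le_trans (le_csSup (norm2to2_bdd Ut) ⟨y, hysum, rfl⟩) ht
      have hproj : ∀ i, (projMat S * U).mulVec x i =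
          if i ∈ S then P i i * z i else 0 := by
        intro i
        rw [← Matrix.mulVec_mulVec]
        have h1 : U.mulVec x i = P i i * z i := by
          rw [hU, ← Matrix.mulVec_mulVec, ← Matrix.mulVec_mulVec,
            diag_mulVec P hP]
        have h2 : (projMat S).mulVec (U.mulVec x) i =
            if i ∈ S then U.mulVec x i else 0 := by
          simp only [Matrix.mulVec, dotProduct, projMat, Matrix.of_apply]
          rw [Finset.sum_eq_single i]
          · by_cases h : i ∈ S <;> simp [h]
          · intro j _ hj
            simp [Ne.symm hj]
          · intro h; exact absurd (Finset.mem_univ i) h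
        rw [h2, h1]
      have hsum : ∑ i, ((projMat S * U).mulVec x i)^2 ≤ (2 / k) * ∑ i, (z i)^2 := by
        rw [Finset.mul_sum]
        refine Finset.sum_le_sum fun i _ => ?_
        rw [hproj i]
        by_cases h : i ∈ S
        · simp only [h, if_true]
          have hPi : (P i i)^2 ≤ 2 / k := by
            have := h; simp only [hS, Finset.mem_filter] at this; exact this.2
          calc (P i i * z i)^2 = (P i i)^2 * (z i)^2 := by ring
            _ ≤ (2 / k) * (z i)^2 :=
                mul_le_mul_of_nonneg_right hPi (sq_nonneg _)
        · simp only [h, if_false]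
          rw [show ((0:ℝ))^2 = 0 by norm_num]
          positivity
      calc Real.sqrt (∑ i, ((projMat S * U).mulVec x i)^2)
          ≤ Real.sqrt ((2 / k) * ∑ i, (z i)^2) := Real.sqrt_le_sqrt hsum
        _ = Real.sqrt (2 / k) * Real.sqrt (∑ i, (z i)^2) := by
            rw [Real.sqrt_mul (by positivity)]
        _ ≤ Real.sqrt (2 / k) * t :=
            mul_le_mul_of_nonneg_left hzle (Real.sqrt_nonneg _)
        _ = t * Real.sqrt (2 / k) := mul_comm _ _
    · positivity
  calc Real.sqrt ((k:ℝ)/2) * normInfTo2 (projMat S * U)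
      ≤ Real.sqrt ((k:ℝ)/2) * (t * Real.sqrt (2 / k)) :=
        mul_le_mul_of_nonneg_left hmain (Real.sqrt_nonneg _)
    _ = t * (Real.sqrt ((k:ℝ)/2) * Real.sqrt (2 / k)) := by ring
    _ = t := by
        rw [← Real.sqrt_mul (by positivity)]
        rw [show (k:ℝ)/2 * (2/k) = 1 by field_simp]
        simp
end

section
/- Let $W \in \mathbb{R}^{\mathcal{Q} \times \mathcal{X}}$ be a symmetric workload matrix with positive part $W^+$ (columns indexed by $\mathcal{X}^+$), and let $\alpha \ge 0$. Then $\gamma_2(W,\alpha) = \gamma_2(W^+,\alpha)$. -/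
open scoped BigOperators

lemma rowNorm_nonneg {ι d : Type*} [Fintype d] (R : Matrix ι d ℝ) : 0 ≤ rowNorm R :=
  Real.iSup_nonneg fun _ => Real.sqrt_nonneg _
lemma colNorm_nonneg {d κ : Type*} [Fintype d] (A : Matrix d κ ℝ) : 0 ≤ colNorm A :=
  Real.iSup_nonneg fun _ => Real.sqrt_nonneg _

lemma gamma2_nonneg {ι κ : Type*} [Fintype ι] [Fintype κ] (M : Matrix ι κ ℝ) : 0 ≤ gamma2 M := by
  apply Real.sInf_nonneg
  rintro c ⟨d, R, A, -, rfl⟩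
  exact mul_nonneg (rowNorm_nonneg R) (colNorm_nonneg A)

lemma gamma2_set_nonempty {ι κ : Type*} [Fintype ι] [Fintype κ] (M : Matrix ι κ ℝ) :
    Set.Nonempty {c | ∃ d : ℕ, ∃ R : Matrix ι (Fin d) ℝ, ∃ A : Matrix (Fin d) κ ℝ,
      R * A = M ∧ c = rowNorm R * colNorm A} := by
  classical
  set e := Fintype.equivFin ι
  refine ⟨_, Fintype.card ι, Matrix.of (fun i k => if e i = k then (1:ℝ) else 0),
    Matrix.of (fun k j => M (e.symm k) j), ?_, rfl⟩
  ext i j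
  simp [Matrix.mul_apply, ite_mul]

lemma entry_le_linfNorm {ι κ : Type*} [Fintype ι] [Fintype κ] (M : Matrix ι κ ℝ) (i : ι) (j : κ) :
    |M i j| ≤ linfNorm M :=
  le_trans (le_ciSup (f := fun j => |M i j|) (Finite.bddAbove_range _) j)
    (le_ciSup (f := fun i => ⨆ j, |M i j|) (Finite.bddAbove_range _) i)

lemma linfNorm_le {ι κ : Type*} (M : Matrix ι κ ℝ) {α : ℝ} (hα : 0 ≤ α)
    (h : ∀ i j, |M i j| ≤ α) : linfNorm M ≤ α :=
  Real.iSup_le (fun i => Real.iSup_le (fun j => h i j) hα) hα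

lemma gamma2_bddBelow {ι κ : Type*} [Fintype ι] [Fintype κ] (M : Matrix ι κ ℝ) :
    BddBelow {c | ∃ d : ℕ, ∃ R : Matrix ι (Fin d) ℝ, ∃ A : Matrix (Fin d) κ ℝ,
      R * A = M ∧ c = rowNorm R * colNorm A} := by
  refine ⟨0, ?_⟩
  rintro c ⟨d, R, A, -, rfl⟩
  exact mul_nonneg (rowNorm_nonneg R) (colNorm_nonneg A)

lemma gamma2_restrict_le {Q X : Type*} [Fintype Q] [Fintype X] (V : Matrix Q (X ⊕ X) ℝ) :
    gamma2 (Matrix.of fun q x => V q (Sum.inl x)) ≤ gamma2 V := by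
  refine le_csInf (gamma2_set_nonempty V) ?_
  rintro c ⟨d, R, A, hRA, rfl⟩
  have hA' : R * (Matrix.of fun k j => A k (Sum.inl j)) = Matrix.of fun q x => V q (Sum.inl x) := by
    ext q j
    have h : (R * A) q (Sum.inl j) = V q (Sum.inl j) := by rw [hRA]
    simpa [Matrix.mul_apply] using h
  refine le_trans (csInf_le (gamma2_bddBelow _) ⟨d, R, _, hA', rfl⟩) ?_
  refine mul_le_mul_of_nonneg_left ?_ (rowNorm_nonneg R)
  refine Real.iSup_le (fun j => ?_) (colNorm_nonneg A)
  exact le_ciSup (f := fun x => Real.sqrt (∑ k, (A k x) ^ 2)) (Finite.bddAbove_range _) (Sum.inl j)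

lemma gamma2_double_le {Q X : Type*} [Fintype Q] [Fintype X] (V : Matrix Q X ℝ) :
    gamma2 (Matrix.of fun q => Sum.elim (V q) (fun j => - V q j)) ≤ gamma2 V := by
  refine le_csInf (gamma2_set_nonempty V) ?_
  rintro c ⟨d, R, A, hRA, rfl⟩
  set A' : Matrix (Fin d) (X ⊕ X) ℝ := Matrix.of fun k => Sum.elim (A k) (fun j => - A k j)
  have hV : ∀ q j, ∑ k, R q k * A k j = V q j := by
    intro q j; rw [← Matrix.mul_apply, hRA]
  have hA' : R * A' = Matrix.of fun q => Sum.elim (V q) (fun j => - V q j) := by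
    ext q x
    cases x with
    | inl j => simpa [Matrix.mul_apply, A'] using hV q j
    | inr j =>
      have : ∑ k, R q k * (- A k j) = - V q j := by
        rw [← hV q j, ← Finset.sum_neg_distrib]; simp [mul_neg]
      simpa [Matrix.mul_apply, A'] using this
  refine le_trans (csInf_le (gamma2_bddBelow _) ⟨d, R, A', hA', rfl⟩) ?_
  refine mul_le_mul_of_nonneg_left ?_ (rowNorm_nonneg R)
  refine Real.iSup_le (fun x => ?_) (colNorm_nonneg A)
  cases x with
  | inl j => exact le_ciSup (f := fun x => Real.sqrt (∑ k, (A k x) ^ 2)) (Finite.bddAbove_range _) j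
  | inr j =>
    have : Real.sqrt (∑ k, (A' k (Sum.inr j)) ^ 2) = Real.sqrt (∑ k, (A k j) ^ 2) := by
      simp [A']
    rw [this]
    exact le_ciSup (f := fun x => Real.sqrt (∑ k, (A k x) ^ 2)) (Finite.bddAbove_range _) j

lemma gamma2Approx_bddBelow {ι κ : Type*} [Fintype ι] [Fintype κ] (W : Matrix ι κ ℝ) (α : ℝ) :
    BddBelow {c | ∃ W' : Matrix ι κ ℝ, linfNorm (W - W') ≤ α ∧ c = gamma2 W'} := by
  refine ⟨0, ?_⟩
  rintro c ⟨W', -, rfl⟩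
  exact gamma2_nonneg W'

lemma linfNorm_self_sub {ι κ : Type*} [Fintype ι] [Fintype κ] (W : Matrix ι κ ℝ) {α : ℝ}
    (hα : 0 ≤ α) : linfNorm (W - W) ≤ α := by
  refine linfNorm_le _ hα fun i j => ?_
  simp [hα]

/-- For a symmetric workload matrix, the approximate γ₂ norm equals that of its positive part. -/
theorem gamma2Approx_symmetric {Q X : Type*} [Fintype Q] [Fintype X]
    (W : Matrix Q (X ⊕ X) ℝ) (α : ℝ) (hα : 0 ≤ α)
    (hsym : ∀ q x, W q (Sum.inr x) = - W q (Sum.inl x)) :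
    gamma2Approx W α = gamma2Approx (Matrix.of fun q x => W q (Sum.inl x)) α := by
  set Wp : Matrix Q X ℝ := Matrix.of fun q x => W q (Sum.inl x)
  apply le_antisymm
  · -- gamma2Approx W α ≤ gamma2Approx Wp α
    refine le_csInf ⟨gamma2 Wp, Wp, linfNorm_self_sub Wp hα, rfl⟩ ?_
    rintro c ⟨V, hV, rfl⟩
    set W' : Matrix Q (X ⊕ X) ℝ := Matrix.of fun q => Sum.elim (V q) (fun j => - V q j)
    have hmem : linfNorm (W - W') ≤ α := by
      refine linfNorm_le _ hα fun q x => ?_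
      cases x with
      | inl j =>
        have := le_trans (entry_le_linfNorm (Wp - V) q j) hV
        simpa [W', Wp, Matrix.sub_apply] using this
      | inr j =>
        have h1 := le_trans (entry_le_linfNorm (Wp - V) q j) hV
        have h2 : (W - W') q (Sum.inr j) = -((Wp - V) q j) := by
          simp [W', Wp, Matrix.sub_apply, hsym q j]; ring
        rw [h2, abs_neg]; exact h1
    exact le_trans (csInf_le (gamma2Approx_bddBelow W α) ⟨W', hmem, rfl⟩) (gamma2_double_le V)
  · -- gamma2Approx Wp α ≤ gamma2Approx W α
    refine le_csInf ⟨gamma2 W, W, linfNorm_self_sub W hα, rfl⟩ ?_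
    rintro c ⟨W', hW', rfl⟩
    have hmem : linfNorm (Wp - Matrix.of fun q x => W' q (Sum.inl x)) ≤ α := by
      refine linfNorm_le _ hα fun q j => ?_
      have := le_trans (entry_le_linfNorm (W - W') q (Sum.inl j)) hW'
      simpa [Wp, Matrix.sub_apply] using this
    exact le_trans (csInf_le (gamma2Approx_bddBelow Wp α) ⟨_, hmem, rfl⟩)
      (gamma2_restrict_le W')
end
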